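/- arXiv:1112.2554 — 3 statements merged into one kernel-verified Lean document; each statement's English description precedes it below -/
import Mathlib

section
/- For complex numbers m₁, …, m_n (n ≥ 1), a variable t, and complex parameters x, y such that all expressions below are defined, P_n(m₁−xt, m₂,…,m_{n−1}, m_n−yt) + (−1)^n P_n(m_n−yt, m_{n−1},…,m₂, m₁−xt) = Σ_{j₁,j₂≥1, j₁+j₂=n} (−1)^{j₂−1} P_{j₁}(m₁−xt, m₂,…,m_{j₁}) · P_{j₂}(m_n−yt, m_{n−1},…,m_{j₁+1}). -/
open scoped BigOperators

/-- `P (m₁, …, mₙ) = Π_{i=1}^{n} 1/(mᵢ + m_{i+1} + ⋯ + mₙ)`; the empty product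
(`n = 0`) is `1`. -/
noncomputable def P {n : ℕ} (m : Fin n → ℂ) : ℂ :=
  ∏ i, (∑ j ∈ Finset.Ici i, m j)⁻¹

open Finset

/-- product of inverse suffix sums over segment `[i, l)` -/
noncomputable def Fp (a : ℕ → ℂ) (i l : ℕ) : ℂ :=
  ∏ p ∈ Finset.Ico i l, (∑ q ∈ Finset.Ico p l, a q)⁻¹

/-- product of inverse prefix sums over segment `[l, j)` -/
noncomputable def Gp (a : ℕ → ℂ) (l j : ℕ) : ℂ :=
  ∏ p ∈ Finset.Ico l j, (∑ q ∈ Finset.Ico l (p + 1), a q)⁻¹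

lemma Fp_self (a : ℕ → ℂ) (i : ℕ) : Fp a i i = 1 := by
  simp [Fp]

lemma Gp_self (a : ℕ → ℂ) (l : ℕ) : Gp a l l = 1 := by
  simp [Gp]

lemma Fp_bot (a : ℕ → ℂ) {i l : ℕ} (h : i < l) :
    Fp a i l = (∑ q ∈ Finset.Ico i l, a q)⁻¹ * Fp a (i + 1) l :=
  Finset.prod_eq_prod_Ico_succ_bot h _

lemma Gp_succ (a : ℕ → ℂ) {l j : ℕ} (h : l ≤ j) :
    Gp a l (j + 1) = Gp a l j * (∑ q ∈ Finset.Ico l (j + 1), a q)⁻¹ :=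
  Finset.prod_Ico_succ_top h _


lemma split3 (f : ℕ → ℂ) (i d : ℕ) :
    ∑ l ∈ Finset.Ico i (i + d + 2), f l
      = f i + (∑ l ∈ Finset.Ico (i + 1) (i + d + 1), f l) + f (i + d + 1) := by
  rw [Finset.sum_eq_sum_Ico_succ_bot (by omega) f,
    show i + d + 2 = (i + d + 1) + 1 from rfl,
    Finset.sum_Ico_succ_top (by omega) f]
  ring

lemma split2bot (f : ℕ → ℂ) (i d : ℕ) :
    ∑ l ∈ Finset.Ico i (i + d + 1), f l
      = f i + ∑ l ∈ Finset.Ico (i + 1) (i + d + 1), f l :=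
  Finset.sum_eq_sum_Ico_succ_bot (by omega) f

lemma split2top (f : ℕ → ℂ) (i d : ℕ) :
    ∑ l ∈ Finset.Ico (i + 1) (i + d + 2), f l
      = (∑ l ∈ Finset.Ico (i + 1) (i + d + 1), f l) + f (i + d + 1) := by
  rw [show i + d + 2 = (i + d + 1) + 1 from rfl,
    Finset.sum_Ico_succ_top (by omega) f]

/-- The key alternating-sum identity. -/
lemma key (a : ℕ → ℂ) : ∀ d : ℕ, 1 ≤ d → ∀ i j : ℕ, j = i + d →
    (∀ p q : ℕ, i ≤ p → p < q → q ≤ j → ∑ x ∈ Finset.Ico p q, a x ≠ 0) →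
    ∑ l ∈ Finset.Ico i (j + 1), (-1 : ℂ) ^ l * (Fp a i l * Gp a l j) = 0 := by
  intro d hd
  induction d, hd using Nat.le_induction with
  | base =>
    intro i j hj H
    subst hj
    rw [show i + 1 + 1 = (i + 1) + 1 from rfl, Finset.sum_Ico_succ_top (by omega),
      Finset.sum_Ico_succ_top (by omega), Finset.Ico_self, Finset.sum_empty]
    have h1 : Fp a i (i + 1) = (∑ q ∈ Finset.Ico i (i+1), a q)⁻¹ := by
      simp [Fp]
    have h2 : Gp a i (i + 1) = (∑ q ∈ Finset.Ico i (i+1), a q)⁻¹ := by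
      simp [Gp]
    rw [Fp_self, Gp_self, h1, h2, pow_succ]
    ring
  | succ d hd ih =>
    intro i j hj H
    subst hj
    set j := i + (d + 1) with hjdef
    have hij : i < j := by omega
    set S : ℂ := ∑ x ∈ Finset.Ico i j, a x with hSdef
    have hS : S ≠ 0 := H i j (le_refl i) hij (le_refl j)
    -- the two smaller instances
    have E1 : ∑ l ∈ Finset.Ico i (i + d + 1), (-1 : ℂ) ^ l * (Fp a i l * Gp a l (i + d)) = 0 := by
      apply ih i (i + d) rfl
      intro p q hp hpq hq; exact H p q hp hpq (by omega)
    have E2 : ∑ l ∈ Finset.Ico (i + 1) (i + d + 2), (-1 : ℂ) ^ l * (Fp a (i+1) l * Gp a l j) = 0 := by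
      apply ih (i + 1) j (by omega)
      intro p q hp hpq hq; exact H p q (by omega) hpq hq
    -- multiply the goal sum by S
    have main : S * ∑ l ∈ Finset.Ico i (j + 1), (-1 : ℂ) ^ l * (Fp a i l * Gp a l j)
        = (∑ l ∈ Finset.Ico i (i + d + 1), (-1 : ℂ) ^ l * (Fp a i l * Gp a l (i + d)))
          + ∑ l ∈ Finset.Ico (i + 1) (i + d + 2), (-1 : ℂ) ^ l * (Fp a (i+1) l * Gp a l j) := by
      rw [Finset.mul_sum, show j + 1 = i + d + 2 from by omega]
      rw [split3 (fun l => S * ((-1 : ℂ) ^ l * (Fp a i l * Gp a l j))) i d]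
      rw [split2bot (fun l => (-1 : ℂ) ^ l * (Fp a i l * Gp a l (i + d))) i d]
      rw [split2top (fun l => (-1 : ℂ) ^ l * (Fp a (i+1) l * Gp a l j)) i d]
      have hbot : S * ((-1 : ℂ) ^ i * (Fp a i i * Gp a i j))
          = (-1 : ℂ) ^ i * (Fp a i i * Gp a i (i + d)) := by
        rw [Fp_self]
        have : Gp a i j = Gp a i (i + d) * S⁻¹ := by
          rw [hjdef, show i + (d+1) = (i+d) + 1 from by omega] at hSdef ⊢
          exact Gp_succ a (by omega)
        rw [this]
        field_simp
      have htop : S * ((-1 : ℂ) ^ (i + d + 1) * (Fp a i (i + d + 1) * Gp a (i + d + 1) j))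
          = (-1 : ℂ) ^ (i + d + 1) * (Fp a (i+1) (i + d + 1) * Gp a (i + d + 1) j) := by
        have hj' : j = i + d + 1 := by omega
        rw [hj', Gp_self]
        have : Fp a i (i + d + 1) = S⁻¹ * Fp a (i+1) (i + d + 1) := by
          rw [hSdef, hj'] at *
          exact Fp_bot a (by omega)
        rw [this]
        field_simp
      have hmid : ∀ l ∈ Finset.Ico (i + 1) (i + d + 1),
          S * ((-1 : ℂ) ^ l * (Fp a i l * Gp a l j))
            = (-1 : ℂ) ^ l * (Fp a i l * Gp a l (i + d))
              + (-1 : ℂ) ^ l * (Fp a (i+1) l * Gp a l j) := by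
        intro l hl
        rw [Finset.mem_Ico] at hl
        set A : ℂ := ∑ x ∈ Finset.Ico i l, a x with hA
        set B : ℂ := ∑ x ∈ Finset.Ico l j, a x with hB
        have hA0 : A ≠ 0 := H i l (le_refl i) (by omega) (by omega)
        have hB0 : B ≠ 0 := H l j (by omega) (by omega) (le_refl j)
        have hAB : A + B = S := Finset.sum_Ico_consecutive a (by omega) (by omega)
        have hF : Fp a i l = A⁻¹ * Fp a (i+1) l := Fp_bot a (by omega)
        have hG : Gp a l j = Gp a l (i + d) * B⁻¹ := by
          have : j = (i + d) + 1 := by omega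
          rw [this] at hB ⊢
          exact Gp_succ a (by omega)
        rw [hF, hG, ← hAB]
        field_simp
        ring
      rw [Finset.sum_congr rfl hmid, Finset.sum_add_distrib, hbot, htop]
      ring
    have : S * ∑ l ∈ Finset.Ico i (j + 1), (-1 : ℂ) ^ l * (Fp a i l * Gp a l j) = 0 := by
      rw [main, E1, E2]; ring
    rcases mul_eq_zero.mp this with h' | h'
    · exact absurd h' hS
    · exact h'

lemma sum_Ici_fin {n : ℕ} (hn : 1 ≤ n) (a : ℕ → ℂ) (f : Fin n → ℂ)
    (hf : ∀ i : Fin n, f i = a i.val) (i : Fin n) :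
    ∑ j ∈ Finset.Ici i, f j = ∑ q ∈ Finset.Ico i.val n, a q := by
  have h1 : ∑ j ∈ Finset.Ici i, f j = ∑ j ∈ Finset.Ici i, a j.val := by
    exact Finset.sum_congr rfl fun j _ => hf j
  have h2 : ∑ j ∈ Finset.Ici i, a j.val = ∑ q ∈ Finset.Icc i.val (n - 1), a q := by
    rw [← Finset.Ico_add_one_right_eq_Icc, show n - 1 + 1 = n from by omega,
      ← Fin.map_valEmbedding_Ici i, Finset.sum_map]
    rfl
  rw [h1, h2, ← Finset.Ico_add_one_right_eq_Icc, show n - 1 + 1 = n from by omega]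

/-- `P` of a (length `k ≤ n`) prefix tuple equals `Fp a 0 k`. -/
lemma P_eq_Fp (a : ℕ → ℂ) (k : ℕ) (hk : 1 ≤ k) (f : Fin k → ℂ)
    (hf : ∀ i : Fin k, f i = a i.val) :
    P f = Fp a 0 k := by
  unfold P Fp
  have h1 : ∀ i : Fin k, (∑ j ∈ Finset.Ici i, f j)⁻¹ = (∑ q ∈ Finset.Ico i.val k, a q)⁻¹ :=
    fun i => by rw [sum_Ici_fin hk a f hf i]
  rw [Finset.prod_congr rfl fun i _ => h1 i]
  rw [Fin.prod_univ_eq_prod_range (fun p => (∑ q ∈ Finset.Ico p k, a q)⁻¹) k,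
    Finset.range_eq_Ico]

/-- `P` of the reversed tuple `(a_{n-1}, …, a_l)` equals `Gp a l n`. -/
lemma P_eq_Gp (a : ℕ → ℂ) (l n : ℕ) (hln : l < n) (f : Fin (n - l) → ℂ)
    (hf : ∀ i : Fin (n - l), f i = a (n - 1 - i.val)) :
    P f = Gp a l n := by
  unfold P Gp
  have hk : 1 ≤ n - l := by omega
  -- inner sums
  have h1 : ∀ i : Fin (n - l),
      ∑ j ∈ Finset.Ici i, f j = ∑ q ∈ Finset.Ico l (n - i.val), a q := by
    intro i
    rw [sum_Ici_fin hk (fun q => a (n - 1 - q)) f (fun i => hf i) i]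
    have := Finset.sum_Ico_reflect a i.val (m := n - l) (n := n - 1) (by omega)
    rw [this, show n - 1 + 1 - (n - l) = l from by omega,
      show n - 1 + 1 - i.val = n - i.val from by omega]
  rw [Finset.prod_congr rfl fun i _ => by rw [h1 i]]
  rw [Fin.prod_univ_eq_prod_range (fun i => (∑ q ∈ Finset.Ico l (n - i), a q)⁻¹) (n - l)]
  rw [← Finset.prod_range_reflect (fun i => (∑ q ∈ Finset.Ico l (n - i), a q)⁻¹) (n - l)]
  rw [Finset.prod_Ico_eq_prod_range (fun p => (∑ q ∈ Finset.Ico l (p + 1), a q)⁻¹) l n]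
  apply Finset.prod_congr rfl
  intro i hi
  rw [Finset.mem_range] at hi
  rw [show n - (n - l - 1 - i) = l + i + 1 from by omega]

/-- Identity (2.1) of Machide: with `m'` the tuple `(m₁ - xt, m₂, …, m_{n-1}, mₙ - yt)`,
`P_n(m') + (-1)^n P_n(reverse m')
  = Σ_{j₁,j₂ ≥ 1, j₁+j₂ = n} (-1)^(j₂-1) P_{j₁}(first j₁ entries of m')
      P_{j₂}(last j₂ entries of m', reversed)`,
asserted for `n ≥ 2`, under the hypothesis that all interval sums of `m'` are
nonzero (so that all expressions are defined).  The index `j : Fin (n-1)`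
encodes `j₁ = j + 1` (and `j₂ = n - j₁`). -/
theorem partial_fraction_shifted (n : ℕ) (hn : 2 ≤ n) (m : Fin n → ℂ) (t x y : ℂ)
    (m' : Fin n → ℂ)
    (hm' : m' = fun k => m k - (if k.val = 0 then x * t else 0)
        - (if k.val = n - 1 then y * t else 0))
    (h : ∀ i j : Fin n, i ≤ j → ∑ k ∈ Finset.Icc i j, m' k ≠ 0) :
    P m' + (-1 : ℂ) ^ n * P (fun i : Fin n => m' ⟨n - 1 - i.val, by omega⟩)
      = ∑ j : Fin (n - 1), (-1 : ℂ) ^ (n - (j.val + 1) - 1)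
          * P (fun i : Fin (j.val + 1) =>
              m' ⟨i.val, by have := i.isLt; have := j.isLt; omega⟩)
          * P (fun i : Fin (n - (j.val + 1)) => m' ⟨n - 1 - i.val, by omega⟩) := by
  clear hm'
  set a : ℕ → ℂ := fun l => if hl : l < n then m' ⟨l, hl⟩ else 0 with ha
  have haval : ∀ i : Fin n, a i.val = m' i := by
    intro i; simp [ha, i.isLt]
  -- nonvanishing of interval sums of `a`
  have hA : ∀ p q : ℕ, 0 ≤ p → p < q → q ≤ n → ∑ z ∈ Finset.Ico p q, a z ≠ 0 := by
    intro p q _ hpq hqn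
    have hp : p < n := by omega
    have hq : q - 1 < n := by omega
    have e1 : ∑ k ∈ Finset.Icc (⟨p, hp⟩ : Fin n) ⟨q - 1, hq⟩, m' k
        = ∑ k ∈ Finset.Icc (⟨p, hp⟩ : Fin n) ⟨q - 1, hq⟩, a k.val :=
      Finset.sum_congr rfl fun k _ => (haval k).symm
    have e2 : ∑ k ∈ Finset.Icc (⟨p, hp⟩ : Fin n) ⟨q - 1, hq⟩, a k.val
        = ∑ z ∈ Finset.Icc p (q - 1), a z := by
      rw [show Finset.Icc p (q - 1)
            = Finset.map Fin.valEmbedding (Finset.Icc (⟨p, hp⟩ : Fin n) ⟨q - 1, hq⟩) from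
          (Fin.map_valEmbedding_Icc (⟨p, hp⟩ : Fin n) ⟨q - 1, hq⟩).symm, Finset.sum_map]
      rfl
    have e3 : ∑ z ∈ Finset.Icc p (q - 1), a z = ∑ z ∈ Finset.Ico p q, a z := by
      rw [← Finset.Ico_add_one_right_eq_Icc, show q - 1 + 1 = q from by omega]
    have h4 := h ⟨p, hp⟩ ⟨q - 1, hq⟩ (by simp [Fin.le_def]; omega)
    rw [e1, e2, e3] at h4
    exact h4
  -- the key identity, endpoints peeled
  have K := key a n (by omega) 0 n (by omega) hA
  have hsplit := split3 (fun l => (-1 : ℂ) ^ l * (Fp a 0 l * Gp a l n)) 0 (n - 1)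
  rw [show 0 + (n - 1) + 2 = n + 1 from by omega, show 0 + 1 = 1 from rfl,
    show 0 + (n - 1) + 1 = n from by omega] at hsplit
  rw [hsplit] at K
  simp only [Fp_self, Gp_self, pow_zero, one_mul, mul_one] at K
  -- K : Gp a 0 n + ∑ l ∈ Ico 1 n, (-1)^l * (Fp a 0 l * Gp a l n) + (-1)^n * Fp a 0 n = 0
  have L1 : P m' = Fp a 0 n := P_eq_Fp a n (by omega) m' (fun i => (haval i).symm)
  have L2 : P (fun i : Fin n => m' ⟨n - 1 - i.val, by omega⟩) = Gp a 0 n := by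
    refine P_eq_Gp a 0 n (by omega) _ (fun i => ?_)
    have hi : n - 1 - i.val < n := by omega
    simp [ha, hi]
  have hR : (∑ j : Fin (n - 1), (-1 : ℂ) ^ (n - (j.val + 1) - 1)
          * P (fun i : Fin (j.val + 1) =>
              m' ⟨i.val, by have := i.isLt; have := j.isLt; omega⟩)
          * P (fun i : Fin (n - (j.val + 1)) => m' ⟨n - 1 - i.val, by omega⟩))
      = ∑ j ∈ Finset.range (n - 1),
          (-1 : ℂ) ^ (n - (j + 1) - 1) * Fp a 0 (j + 1) * Gp a (j + 1) n := by
    rw [← Fin.sum_univ_eq_sum_range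
      (fun j => (-1 : ℂ) ^ (n - (j + 1) - 1) * Fp a 0 (j + 1) * Gp a (j + 1) n) (n - 1)]
    apply Finset.sum_congr rfl
    intro j _
    congr 1
    · congr 1
      exact P_eq_Fp a (j.val + 1) (by omega) _ (fun i => by
        have hi : i.val < n := by have := i.isLt; have := j.isLt; omega
        simp [ha, hi])
    · exact P_eq_Gp a (j.val + 1) n (by have := j.isLt; omega) _ (fun i => by
        have hi : n - 1 - i.val < n := by omega
        simp [ha, hi])
  rw [L1, L2, hR]
  have hR2 : ∑ j ∈ Finset.range (n - 1),
      (-1 : ℂ) ^ (n - (j + 1) - 1) * Fp a 0 (j + 1) * Gp a (j + 1) n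
      = ∑ l ∈ Finset.Ico 1 n, (-1 : ℂ) ^ (n - l - 1) * Fp a 0 l * Gp a l n := by
    rw [Finset.sum_Ico_eq_sum_range (fun l => (-1 : ℂ) ^ (n - l - 1) * Fp a 0 l * Gp a l n) 1 n]
    apply Finset.sum_congr rfl
    intro k _
    rw [show 1 + k = k + 1 from by omega]
  rw [hR2]
  have hsign : ∀ l ∈ Finset.Ico 1 n,
      (-1 : ℂ) ^ (n - l - 1) * Fp a 0 l * Gp a l n
        = -(-1 : ℂ) ^ n * ((-1 : ℂ) ^ l * (Fp a 0 l * Gp a l n)) := by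
    intro l hl
    rw [Finset.mem_Ico] at hl
    have h1 : ((-1 : ℂ)) ^ (n - l - 1) * (-1) ^ (l + 1) = (-1) ^ n := by
      rw [← pow_add, show n - l - 1 + (l + 1) = n from by omega]
    have h2 : ((-1 : ℂ)) ^ (l + 1) * (-1) ^ (l + 1) = 1 := by
      rw [← pow_add, show (l + 1) + (l + 1) = 2 * (l + 1) from by ring, pow_mul]
      norm_num
    have h3 : ((-1 : ℂ)) ^ (n - l - 1) = (-1) ^ n * (-1) ^ (l + 1) := by
      calc ((-1 : ℂ)) ^ (n - l - 1)
          = (-1) ^ (n - l - 1) * ((-1) ^ (l + 1) * (-1) ^ (l + 1)) := by rw [h2, mul_one]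
        _ = ((-1) ^ (n - l - 1) * (-1) ^ (l + 1)) * (-1) ^ (l + 1) := by ring
        _ = (-1) ^ n * (-1) ^ (l + 1) := by rw [h1]
    rw [h3, pow_succ]
    ring
  rw [Finset.sum_congr rfl hsign, ← Finset.mul_sum]
  have h2 : ((-1 : ℂ)) ^ n * (-1) ^ n = 1 := by
    rw [← pow_add, show n + n = 2 * n from by ring, pow_mul]
    norm_num
  linear_combination ((-1 : ℂ)) ^ n * K - (Fp a 0 n) * h2
end

section
/- Let l, n be integers with l ≥ 5 and n ≥ 3, and let Ψ be the differential operator Ψ(f) = (∂²f/∂y² − ∂²f/∂x∂y) evaluated at x = y = 1, acting on smooth functions f(x,y) of two real (or complex) variables. Then: (a) Ψ( (y−x)^n ( G_l^n(x+y,y) + (−1)^n G_l^n(y+x,x) ) ) = 0; (b) Ψ( (y−x)² ( G_l^4(x+y,y) + G_l^4(y+x,x) ) ) = 8 G_l^4(2,1); (c) Ψ( (y−x) ( G_l^3(x+y,y) − G_l^3(y+x,x) ) ) = 4 ∂G_l^3/∂y (2,1); (d) Ψ( G_l^2(x+y,y) + G_l^2(y+x,x) ) = ∂²G_l^2/∂y²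 (2,1). -/
open scoped BigOperators

/-- The multiple zeta value `ζ(l₁, …, lₙ)`, as a sum over strictly decreasing
tuples of positive integers. -/
noncomputable def mzv {n : ℕ} (l : Fin n → ℕ) : ℝ :=
  ∑' m : {m : Fin n → ℕ // StrictAnti m ∧ ∀ i, 0 < m i},
    ∏ i, ((m.1 i : ℝ) ^ (l i))⁻¹

/-- The Riemann zeta value `ζ(k)`. -/
noncomputable def rz (k : ℕ) : ℝ := ∑' m : ℕ+, ((m : ℝ) ^ k)⁻¹

/-- The weighted sum with two parameters
`G_l^n(x,y) = Σ_{l₁≥2, l₂,…,lₙ≥1, l₁+⋯+lₙ=l} x^(l₁-1) y^(l-l₁-(n-1)) ζ(l₁,…,lₙ)`. -/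
noncomputable def G (l n : ℕ) (x y : ℂ) : ℂ :=
  match n with
  | 0 => 0
  | k + 1 =>
    ∑ c ∈ (Finset.Nat.antidiagonalTuple (k + 1) l).filter
        (fun c => 2 ≤ c 0 ∧ ∀ i, 1 ≤ c i),
      x ^ (c 0 - 1) * y ^ (l - c 0 - k) * (mzv c : ℂ)

/-- The differential operator `Ψ(f) = (∂²f/∂y² - ∂²f/∂x∂y)` evaluated at `x = y = 1`. -/
noncomputable def Psi (f : ℂ → ℂ → ℂ) : ℂ :=
  deriv (deriv (f 1)) 1 - deriv (fun x => deriv (f x) 1) 1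

noncomputable def Gd (a b l n : ℕ) (x y : ℂ) : ℂ :=
  match n with
  | 0 => 0
  | k + 1 =>
    ∑ c ∈ (Finset.Nat.antidiagonalTuple (k + 1) l).filter
        (fun c => 2 ≤ c 0 ∧ ∀ i, 1 ≤ c i),
      ((c 0 - 1).descFactorial a : ℂ) * ((l - c 0 - k).descFactorial b : ℂ)
        * x ^ (c 0 - 1 - a) * y ^ (l - c 0 - k - b) * (mzv c : ℂ)

theorem G_eq_Gd (l n : ℕ) (x y : ℂ) : G l n x y = Gd 0 0 l n x y := by
  cases n with
  | zero => rfl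
  | succ k =>
    simp only [G, Gd]
    refine Finset.sum_congr rfl fun c hc => ?_
    simp [Nat.descFactorial]

theorem Gd_hasDerivAt (a b l n : ℕ) {u v : ℂ → ℂ} {u' v' : ℂ} {t : ℂ}
    (hu : HasDerivAt u u' t) (hv : HasDerivAt v v' t) :
    HasDerivAt (fun s => Gd a b l n (u s) (v s))
      (u' * Gd (a+1) b l n (u t) (v t) + v' * Gd a (b+1) l n (u t) (v t)) t := by
  cases n with
  | zero => simpa [Gd] using hasDerivAt_const t (0 : ℂ)
  | succ k =>
    simp only [Gd]
    rw [Finset.mul_sum, Finset.mul_sum, ← Finset.sum_add_distrib]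
    refine HasDerivAt.fun_sum fun c hc => ?_
    have h := ((((hu.fun_pow (c 0 - 1 - a)).const_mul
        (((c 0 - 1).descFactorial a : ℂ) * ((l - c 0 - k).descFactorial b : ℂ))).fun_mul
        (hv.fun_pow (l - c 0 - k - b))).mul_const ((mzv c : ℂ)))
    refine h.congr_deriv ?_
    simp only [Nat.descFactorial_succ, ← Nat.sub_sub]
    push_cast
    ring

theorem hd_xy (a b l n : ℕ) (x y : ℂ) :
    HasDerivAt (fun y => Gd a b l n (x + y) y)
      (Gd (a+1) b l n (x+y) y + Gd a (b+1) l n (x+y) y) y := by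
  simpa using Gd_hasDerivAt a b l n ((hasDerivAt_id y).const_add x) (hasDerivAt_id y)

theorem hd_yx (a b l n : ℕ) (x y : ℂ) :
    HasDerivAt (fun y => Gd a b l n (y + x) x) (Gd (a+1) b l n (y+x) x) y := by
  simpa using Gd_hasDerivAt a b l n ((hasDerivAt_id y).add_const x) (hasDerivAt_const y x)

theorem hd_x1 (a b l n : ℕ) (x : ℂ) :
    HasDerivAt (fun x => Gd a b l n (x + 1) 1) (Gd (a+1) b l n (x+1) 1) x := by
  simpa using Gd_hasDerivAt a b l n ((hasDerivAt_id x).add_const 1) (hasDerivAt_const x 1)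

theorem hd_1x (a b l n : ℕ) (x : ℂ) :
    HasDerivAt (fun x => Gd a b l n (1 + x) x)
      (Gd (a+1) b l n (1+x) x + Gd a (b+1) l n (1+x) x) x := by
  simpa using Gd_hasDerivAt a b l n ((hasDerivAt_id x).const_add 1) (hasDerivAt_id x)

theorem hd_2y (a b l n : ℕ) (y : ℂ) :
    HasDerivAt (fun y => Gd a b l n 2 y) (Gd a (b+1) l n 2 y) y := by
  simpa using Gd_hasDerivAt a b l n (hasDerivAt_const y 2) (hasDerivAt_id y)


theorem partD (l : ℕ) :
    Psi (fun x y => G l 2 (x + y) y + G l 2 (y + x) x)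
        = deriv (deriv (fun y => G l 2 2 y)) 1 := by
  simp only [Psi, G_eq_Gd]
  have hy1 : ∀ x y : ℂ, HasDerivAt (fun y => Gd 0 0 l 2 (x + y) y + Gd 0 0 l 2 (y + x) x)
      (Gd 1 0 l 2 (x+y) y + Gd 0 1 l 2 (x+y) y + Gd 1 0 l 2 (y+x) x) y :=
    fun x y => (hd_xy 0 0 l 2 x y).add (hd_yx 0 0 l 2 x y)
  have e1 : deriv (fun y => Gd 0 0 l 2 (1 + y) y + Gd 0 0 l 2 (y + 1) 1)
      = fun y => Gd 1 0 l 2 (1+y) y + Gd 0 1 l 2 (1+y) y + Gd 1 0 l 2 (y+1) 1 :=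
    funext fun y => (hy1 1 y).deriv
  have e2 : (fun x : ℂ => deriv (fun y => Gd 0 0 l 2 (x + y) y + Gd 0 0 l 2 (y + x) x) 1)
      = fun x => Gd 1 0 l 2 (x+1) 1 + Gd 0 1 l 2 (x+1) 1 + Gd 1 0 l 2 (1+x) x :=
    funext fun x => (hy1 x 1).deriv
  have e3 : deriv (fun y => Gd 0 0 l 2 2 y) = fun y => Gd 0 1 l 2 2 y :=
    funext fun y => (hd_2y 0 0 l 2 y).deriv
  rw [e1, e2, e3]
  rw [(((hd_xy 1 0 l 2 1 1).fun_add (hd_xy 0 1 l 2 1 1)).fun_add (hd_yx 1 0 l 2 1 1)).deriv]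
  rw [(((hd_x1 1 0 l 2 1).fun_add (hd_x1 0 1 l 2 1)).fun_add (hd_1x 1 0 l 2 1)).deriv]
  rw [(hd_2y 0 1 l 2 1).deriv]
  norm_num
  ring

theorem partC (l : ℕ) :
    Psi (fun x y => (y - x) * (G l 3 (x + y) y - G l 3 (y + x) x))
        = 4 * deriv (fun y => G l 3 2 y) 1 := by
  simp only [Psi, G_eq_Gd]
  have hy1 : ∀ x y : ℂ, HasDerivAt
      (fun y => (y - x) * (Gd 0 0 l 3 (x + y) y - Gd 0 0 l 3 (y + x) x))
      ((Gd 0 0 l 3 (x+y) y - Gd 0 0 l 3 (y+x) x)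
        + (y - x) * (Gd 1 0 l 3 (x+y) y + Gd 0 1 l 3 (x+y) y - Gd 1 0 l 3 (y+x) x)) y := by
    intro x y
    simpa using ((hasDerivAt_id y).sub_const x).fun_mul
      ((hd_xy 0 0 l 3 x y).fun_sub (hd_yx 0 0 l 3 x y))
  have e1 : deriv (fun y => (y - 1) * (Gd 0 0 l 3 (1 + y) y - Gd 0 0 l 3 (y + 1) 1))
      = fun y => (Gd 0 0 l 3 (1+y) y - Gd 0 0 l 3 (y+1) 1)
        + (y - 1) * (Gd 1 0 l 3 (1+y) y + Gd 0 1 l 3 (1+y) y - Gd 1 0 l 3 (y+1) 1) :=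
    funext fun y => (hy1 1 y).deriv
  have e2 : (fun x : ℂ => deriv
        (fun y => (y - x) * (Gd 0 0 l 3 (x + y) y - Gd 0 0 l 3 (y + x) x)) 1)
      = fun x => (Gd 0 0 l 3 (x+1) 1 - Gd 0 0 l 3 (1+x) x)
        + (1 - x) * (Gd 1 0 l 3 (x+1) 1 + Gd 0 1 l 3 (x+1) 1 - Gd 1 0 l 3 (1+x) x) :=
    funext fun x => (hy1 x 1).deriv
  have e3 : deriv (fun y => Gd 0 0 l 3 2 y) = fun y => Gd 0 1 l 3 2 y :=
    funext fun y => (hd_2y 0 0 l 3 y).deriv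
  rw [e1, e2, e3]
  have d1 : deriv (fun y => (Gd 0 0 l 3 (1+y) y - Gd 0 0 l 3 (y+1) 1)
        + (y - 1) * (Gd 1 0 l 3 (1+y) y + Gd 0 1 l 3 (1+y) y - Gd 1 0 l 3 (y+1) 1)) 1 = _ :=
    (((hd_xy 0 0 l 3 1 1).sub (hd_yx 0 0 l 3 1 1)).add
      (((hasDerivAt_id 1).sub_const 1).mul
        (((hd_xy 1 0 l 3 1 1).add (hd_xy 0 1 l 3 1 1)).sub (hd_yx 1 0 l 3 1 1)))).deriv
  have d2 : deriv (fun x => (Gd 0 0 l 3 (x+1) 1 - Gd 0 0 l 3 (1+x) x)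
        + (1 - x) * (Gd 1 0 l 3 (x+1) 1 + Gd 0 1 l 3 (x+1) 1 - Gd 1 0 l 3 (1+x) x)) 1 = _ :=
    (((hd_x1 0 0 l 3 1).sub (hd_1x 0 0 l 3 1)).add
      (((hasDerivAt_const 1 (1:ℂ)).sub (hasDerivAt_id 1)).mul
        (((hd_x1 1 0 l 3 1).add (hd_x1 0 1 l 3 1)).sub (hd_1x 1 0 l 3 1)))).deriv
  rw [d1, d2]
  simp only [id_eq]
  norm_num
  norm_num
  ring

theorem partB (l : ℕ) :
    Psi (fun x y => (y - x) ^ 2 * (G l 4 (x + y) y + G l 4 (y + x) x)) = 8 * G l 4 2 1 := by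
  simp only [Psi, G_eq_Gd]
  have hy1 : ∀ x y : ℂ, HasDerivAt
      (fun y => (y - x) ^ 2 * (Gd 0 0 l 4 (x + y) y + Gd 0 0 l 4 (y + x) x))
      (2 * (y - x) * (Gd 0 0 l 4 (x+y) y + Gd 0 0 l 4 (y+x) x)
        + (y - x) ^ 2 * (Gd 1 0 l 4 (x+y) y + Gd 0 1 l 4 (x+y) y + Gd 1 0 l 4 (y+x) x)) y := by
    intro x y
    simpa using (((hasDerivAt_id y).sub_const x).fun_pow 2).fun_mul
      ((hd_xy 0 0 l 4 x y).fun_add (hd_yx 0 0 l 4 x y))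
  have e1 : deriv (fun y => (y - 1) ^ 2 * (Gd 0 0 l 4 (1 + y) y + Gd 0 0 l 4 (y + 1) 1))
      = fun y => 2 * (y - 1) * (Gd 0 0 l 4 (1+y) y + Gd 0 0 l 4 (y+1) 1)
        + (y - 1) ^ 2 * (Gd 1 0 l 4 (1+y) y + Gd 0 1 l 4 (1+y) y + Gd 1 0 l 4 (y+1) 1) :=
    funext fun y => (hy1 1 y).deriv
  have e2 : (fun x : ℂ => deriv
        (fun y => (y - x) ^ 2 * (Gd 0 0 l 4 (x + y) y + Gd 0 0 l 4 (y + x) x)) 1)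
      = fun x => 2 * (1 - x) * (Gd 0 0 l 4 (x+1) 1 + Gd 0 0 l 4 (1+x) x)
        + (1 - x) ^ 2 * (Gd 1 0 l 4 (x+1) 1 + Gd 0 1 l 4 (x+1) 1 + Gd 1 0 l 4 (1+x) x) :=
    funext fun x => (hy1 x 1).deriv
  rw [e1, e2]
  have d1 : deriv (fun y => 2 * (y - 1) * (Gd 0 0 l 4 (1+y) y + Gd 0 0 l 4 (y+1) 1)
        + (y - 1) ^ 2 * (Gd 1 0 l 4 (1+y) y + Gd 0 1 l 4 (1+y) y + Gd 1 0 l 4 (y+1) 1)) 1 = _ :=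
    (((((hasDerivAt_id 1).sub_const 1).const_mul 2).mul
        ((hd_xy 0 0 l 4 1 1).add (hd_yx 0 0 l 4 1 1))).add
      ((((hasDerivAt_id 1).sub_const 1).pow 2).mul
        (((hd_xy 1 0 l 4 1 1).add (hd_xy 0 1 l 4 1 1)).add (hd_yx 1 0 l 4 1 1)))).deriv
  have d2 : deriv (fun x => 2 * (1 - x) * (Gd 0 0 l 4 (x+1) 1 + Gd 0 0 l 4 (1+x) x)
        + (1 - x) ^ 2 * (Gd 1 0 l 4 (x+1) 1 + Gd 0 1 l 4 (x+1) 1 + Gd 1 0 l 4 (1+x) x)) 1 = _ :=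
    (((((hasDerivAt_const 1 (1:ℂ)).sub (hasDerivAt_id 1)).const_mul 2).mul
        ((hd_x1 0 0 l 4 1).add (hd_1x 0 0 l 4 1))).add
      ((((hasDerivAt_const 1 (1:ℂ)).sub (hasDerivAt_id 1)).pow 2).mul
        (((hd_x1 1 0 l 4 1).add (hd_x1 0 1 l 4 1)).add (hd_1x 1 0 l 4 1)))).deriv
  rw [d1, d2]
  norm_num
  ring

theorem partA (l n : ℕ) (hn : 3 ≤ n) :
    Psi (fun x y => (y - x) ^ n
        * (G l n (x + y) y + (-1 : ℂ) ^ n * G l n (y + x) x)) = 0 := by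
  have h1 : n - 1 - 1 ≠ 0 := by omega
  have h2 : n - 1 ≠ 0 := by omega
  have h3 : n ≠ 0 := by omega
  simp only [Psi, G_eq_Gd]
  have hy1 : ∀ x y : ℂ, HasDerivAt
      (fun y => (y - x) ^ n
        * (Gd 0 0 l n (x + y) y + (-1 : ℂ) ^ n * Gd 0 0 l n (y + x) x))
      ((n : ℂ) * (y - x) ^ (n - 1)
          * (Gd 0 0 l n (x+y) y + (-1 : ℂ) ^ n * Gd 0 0 l n (y+x) x)
        + (y - x) ^ n * (Gd 1 0 l n (x+y) y + Gd 0 1 l n (x+y) y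
          + (-1 : ℂ) ^ n * Gd 1 0 l n (y+x) x)) y := by
    intro x y
    simpa using (((hasDerivAt_id y).sub_const x).fun_pow n).fun_mul
      ((hd_xy 0 0 l n x y).fun_add ((hd_yx 0 0 l n x y).const_mul ((-1 : ℂ) ^ n)))
  have e1 : deriv (fun y => (y - 1) ^ n
        * (Gd 0 0 l n (1 + y) y + (-1 : ℂ) ^ n * Gd 0 0 l n (y + 1) 1))
      = fun y => (n : ℂ) * (y - 1) ^ (n - 1)
          * (Gd 0 0 l n (1+y) y + (-1 : ℂ) ^ n * Gd 0 0 l n (y+1) 1)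
        + (y - 1) ^ n * (Gd 1 0 l n (1+y) y + Gd 0 1 l n (1+y) y
          + (-1 : ℂ) ^ n * Gd 1 0 l n (y+1) 1) :=
    funext fun y => (hy1 1 y).deriv
  have e2 : (fun x : ℂ => deriv (fun y => (y - x) ^ n
        * (Gd 0 0 l n (x + y) y + (-1 : ℂ) ^ n * Gd 0 0 l n (y + x) x)) 1)
      = fun x => (n : ℂ) * (1 - x) ^ (n - 1)
          * (Gd 0 0 l n (x+1) 1 + (-1 : ℂ) ^ n * Gd 0 0 l n (1+x) x)
        + (1 - x) ^ n * (Gd 1 0 l n (x+1) 1 + Gd 0 1 l n (x+1) 1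
          + (-1 : ℂ) ^ n * Gd 1 0 l n (1+x) x) :=
    funext fun x => (hy1 x 1).deriv
  rw [e1, e2]
  have d1 : deriv (fun y => (n : ℂ) * (y - 1) ^ (n - 1)
          * (Gd 0 0 l n (1+y) y + (-1 : ℂ) ^ n * Gd 0 0 l n (y+1) 1)
        + (y - 1) ^ n * (Gd 1 0 l n (1+y) y + Gd 0 1 l n (1+y) y
          + (-1 : ℂ) ^ n * Gd 1 0 l n (y+1) 1)) 1 = _ :=
    ((((((hasDerivAt_id 1).sub_const 1).pow (n - 1)).const_mul (n : ℂ)).mul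
        ((hd_xy 0 0 l n 1 1).add ((hd_yx 0 0 l n 1 1).const_mul ((-1 : ℂ) ^ n)))).add
      ((((hasDerivAt_id 1).sub_const 1).pow n).mul
        (((hd_xy 1 0 l n 1 1).add (hd_xy 0 1 l n 1 1)).add
          ((hd_yx 1 0 l n 1 1).const_mul ((-1 : ℂ) ^ n))))).deriv
  have d2 : deriv (fun x => (n : ℂ) * (1 - x) ^ (n - 1)
          * (Gd 0 0 l n (x+1) 1 + (-1 : ℂ) ^ n * Gd 0 0 l n (1+x) x)
        + (1 - x) ^ n * (Gd 1 0 l n (x+1) 1 + Gd 0 1 l n (x+1) 1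
          + (-1 : ℂ) ^ n * Gd 1 0 l n (1+x) x)) 1 = _ :=
    (((((hasDerivAt_const 1 (1:ℂ)).sub (hasDerivAt_id 1)).pow (n - 1)).const_mul (n : ℂ)).mul
        ((hd_x1 0 0 l n 1).add ((hd_1x 0 0 l n 1).const_mul ((-1 : ℂ) ^ n))) |>.add
      ((((hasDerivAt_const 1 (1:ℂ)).sub (hasDerivAt_id 1)).pow n).mul
        (((hd_x1 1 0 l n 1).add (hd_x1 0 1 l n 1)).add
          ((hd_1x 1 0 l n 1).const_mul ((-1 : ℂ) ^ n))))).deriv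
  rw [d1, d2]
  simp [sub_self, zero_pow h1, zero_pow h2, zero_pow h3]

/-- Lemma 4.1 (i) of Machide: values of `Ψ` on weighted sums of multiple zeta
values, for integers `l ≥ 5` and `n ≥ 3`.  The partial derivatives of
`G_l^n` (a polynomial in `x, y`) are expressed via `deriv`. -/
theorem Psi_weighted_sums (l n : ℕ) (hl : 5 ≤ l) (hn : 3 ≤ n) :
    Psi (fun x y => (y - x) ^ n
          * (G l n (x + y) y + (-1 : ℂ) ^ n * G l n (y + x) x)) = 0
    ∧ Psi (fun x y => (y - x) ^ 2
          * (G l 4 (x + y) y + G l 4 (y + x) x)) = 8 * G l 4 2 1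
    ∧ Psi (fun x y => (y - x)
          * (G l 3 (x + y) y - G l 3 (y + x) x))
        = 4 * deriv (fun y => G l 3 2 y) 1
    ∧ Psi (fun x y => G l 2 (x + y) y + G l 2 (y + x) x)
        = deriv (deriv (fun y => G l 2 2 y)) 1 := by
  exact ⟨partA l n hn, partB l, partC l, partD l⟩
end

section
/- For any integer l ≥ 3, one has Σ_{j=2}^{l−1} 2^j ζ(j, l−j) = (l+1) ζ(l) (the weighted Euler sum formula). -/
set_option maxHeartbeats 1600000

open scoped BigOperators
open Finset Filter

/-- Harmonic sum `H t = 1 + 1/2 + ... + 1/t`. -/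
noncomputable def hsum (t : ℕ) : ℝ := ∑ k ∈ Finset.range t, ((k : ℝ) + 1)⁻¹

lemma hsum_nonneg (t : ℕ) : 0 ≤ hsum t := by
  apply Finset.sum_nonneg; intro i _; positivity

lemma hsum_le_sqrt (t : ℕ) : hsum t ≤ 2 * Real.sqrt t := by
  induction t with
  | zero => simp [hsum]
  | succ n ih =>
    rw [hsum, Finset.sum_range_succ, ← hsum]
    have h1 : ((n : ℝ) + 1)⁻¹ ≤ 2 * Real.sqrt (n + 1) - 2 * Real.sqrt n := by
      have hs : Real.sqrt n + Real.sqrt (n+1) ≠ 0 := by positivity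
      have h2 : (2 * Real.sqrt (n+1) - 2 * Real.sqrt n) * (Real.sqrt (n+1) + Real.sqrt n)
          = 2 := by
        have := Real.sq_sqrt (by positivity : (0:ℝ) ≤ (n:ℝ)+1)
        have := Real.sq_sqrt (by positivity : (0:ℝ) ≤ (n:ℝ))
        nlinarith
      rw [inv_le_iff_one_le_mul₀ (by positivity)]
      have h3 : Real.sqrt (n+1) + Real.sqrt n ≤ 2 * ((n:ℝ)+1) := by
        have b1 : Real.sqrt (n+1) ≤ (n:ℝ)+1 := by
          have := Real.sqrt_le_sqrt (show ((n:ℝ)+1) ≤ ((n:ℝ)+1)^2 by nlinarith)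
          calc Real.sqrt (n+1) ≤ Real.sqrt (((n:ℝ)+1)^2) := this
          _ = (n:ℝ)+1 := Real.sqrt_sq (by positivity)
        have b2 : Real.sqrt n ≤ (n:ℝ)+1 := by
          have := Real.sqrt_le_sqrt (show ((n:ℝ)) ≤ ((n:ℝ)+1)^2 by nlinarith)
          calc Real.sqrt n ≤ Real.sqrt (((n:ℝ)+1)^2) := this
          _ = (n:ℝ)+1 := Real.sqrt_sq (by positivity)
        linarith
      have hS : 0 < Real.sqrt ((n:ℝ)+1) + Real.sqrt n := by positivity
      nlinarith [hS, h2, h3]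
    push_cast
    linarith

/-- `Σ 1/(n+1)^(3/2)` converges. -/
lemma summable_shift_rpow : Summable (fun n : ℕ => (((n:ℝ) + 1) ^ ((3:ℝ)/2))⁻¹) := by
  have h : Summable (fun n : ℕ => ((n:ℝ) ^ ((3:ℝ)/2))⁻¹) :=
    Real.summable_nat_rpow_inv.2 (by norm_num)
  have := (summable_nat_add_iff 1).2 h
  refine this.congr fun n => ?_
  push_cast
  ring_nf

/-- comparison bound: for `2 ≤ j`, `1 ≤ k`,
`1/((a+b+2)^j (b+1)^k) ≤ 1/((a+1)^(3/2) (b+1)^(3/2))`. -/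
lemma term_le (j k a b : ℕ) (hj : 2 ≤ j) (hk : 1 ≤ k) :
    (((a:ℝ) + b + 2) ^ j)⁻¹ * (((b:ℝ) + 1) ^ k)⁻¹
      ≤ (((a:ℝ) + 1) ^ ((3:ℝ)/2))⁻¹ * (((b:ℝ) + 1) ^ ((3:ℝ)/2))⁻¹ := by
  set x : ℝ := (a:ℝ) + 1 with hx
  set y : ℝ := (b:ℝ) + 1 with hy
  have hx1 : (1:ℝ) ≤ x := by rw [hx]; linarith [Nat.cast_nonneg (α:=ℝ) a]
  have hy1 : (1:ℝ) ≤ y := by rw [hy]; linarith [Nat.cast_nonneg (α:=ℝ) b]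
  have hm : (a:ℝ) + b + 2 = x + y := by rw [hx, hy]; ring
  rw [hm]
  have hxy1 : (1:ℝ) ≤ x + y := by linarith
  have key : x ^ ((3:ℝ)/2) * y ^ ((3:ℝ)/2) ≤ (x+y)^j * y^k := by
    have h1 : x ^ ((3:ℝ)/2) * y ^ ((3:ℝ)/2) ≤ (x+y)^(2:ℕ) * y^(1:ℕ) := by
      have e1 : ((x+y):ℝ)^(2:ℕ) = (x+y) ^ ((3:ℝ)/2) * (x+y) ^ ((1:ℝ)/2) := by
        rw [← Real.rpow_natCast (x+y) 2, ← Real.rpow_add (by linarith)]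
        norm_num
      have e2 : y ^ ((3:ℝ)/2) = y ^ ((1:ℝ)/2) * y^(1:ℕ) := by
        rw [← Real.rpow_natCast y 1, ← Real.rpow_add (by linarith)]
        norm_num
      rw [e1, e2]
      have b1 : x ^ ((3:ℝ)/2) ≤ (x+y) ^ ((3:ℝ)/2) :=
        Real.rpow_le_rpow (by linarith) (by linarith) (by norm_num)
      have b2 : y ^ ((1:ℝ)/2) ≤ (x+y) ^ ((1:ℝ)/2) :=
        Real.rpow_le_rpow (by linarith) (by linarith) (by norm_num)
      have p1 : (0:ℝ) ≤ x ^ ((3:ℝ)/2) := Real.rpow_nonneg (by linarith) _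
      have p2 : (0:ℝ) ≤ y ^ ((1:ℝ)/2) := Real.rpow_nonneg (by linarith) _
      have p3 : (0:ℝ) ≤ (x+y) ^ ((3:ℝ)/2) := Real.rpow_nonneg (by linarith) _
      calc x ^ ((3:ℝ)/2) * (y ^ ((1:ℝ)/2) * y^(1:ℕ))
          ≤ (x+y) ^ ((3:ℝ)/2) * ((x+y) ^ ((1:ℝ)/2) * y^(1:ℕ)) := by
            apply mul_le_mul b1 _ (by positivity) p3
            apply mul_le_mul_of_nonneg_right b2 (by simp; linarith)
        _ = (x+y) ^ ((3:ℝ)/2) * (x+y) ^ ((1:ℝ)/2) * y^(1:ℕ) := by ring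
    have h2 : ((x+y):ℝ)^(2:ℕ) * y^(1:ℕ) ≤ (x+y)^j * y^k := by
      apply mul_le_mul (pow_le_pow_right₀ hxy1 hj) (pow_le_pow_right₀ hy1 hk)
        (by positivity) (by positivity)
    exact h1.trans h2
  rw [← mul_inv, ← mul_inv]
  apply inv_anti₀ (by positivity) key

/-- Summability of the double zeta terms over pairs. -/
lemma summable_F (j k : ℕ) (hj : 2 ≤ j) (hk : 1 ≤ k) :
    Summable (fun p : ℕ × ℕ => (((p.1:ℝ) + p.2 + 2) ^ j)⁻¹ * (((p.2:ℝ) + 1) ^ k)⁻¹) := by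
  have hs : Summable (fun p : ℕ × ℕ =>
      (((p.1:ℝ) + 1) ^ ((3:ℝ)/2))⁻¹ * (((p.2:ℝ) + 1) ^ ((3:ℝ)/2))⁻¹) :=
    Summable.mul_of_nonneg summable_shift_rpow summable_shift_rpow
      (fun n => by positivity) (fun n => by positivity)
  have hnn : ∀ p : ℕ × ℕ, 0 ≤ (((p.1:ℝ) + p.2 + 2) ^ j)⁻¹ * (((p.2:ℝ) + 1) ^ k)⁻¹ := by
    intro p; positivity
  exact Summable.of_nonneg_of_le hnn (fun p => term_le j k p.1 p.2 hj hk) hs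

/-- pairs `(a,b)` ↔ strictly decreasing positive pairs `(a+b+2, b+1)`. -/
def pairEquiv : (ℕ × ℕ) ≃ {m : Fin 2 → ℕ // StrictAnti m ∧ ∀ i, 0 < m i} where
  toFun p := ⟨![p.1 + p.2 + 2, p.2 + 1], by
    constructor
    · intro i j hij
      fin_cases i <;> fin_cases j <;> simp_all <;> omega
    · intro i; fin_cases i <;> simp⟩
  invFun m := (m.1 0 - m.1 1 - 1, m.1 1 - 1)
  left_inv p := by obtain ⟨a, b⟩ := p; simp; omega
  right_inv m := by
    obtain ⟨f, hanti, hpos⟩ := m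
    have h01 : f 1 < f 0 := hanti (by norm_num : (0 : Fin 2) < 1)
    have h1 : 0 < f 1 := hpos 1
    ext i
    fin_cases i <;> simp <;> omega

lemma mzv_two (j k : ℕ) :
    mzv ![j, k] = ∑' p : ℕ × ℕ, (((p.1:ℝ) + p.2 + 2) ^ j)⁻¹ * (((p.2:ℝ) + 1) ^ k)⁻¹ := by
  rw [mzv, ← pairEquiv.tsum_eq]
  apply tsum_congr
  intro p
  rw [Fin.prod_univ_two]
  simp [pairEquiv]

def natPNat : ℕ ≃ ℕ+ where
  toFun n := ⟨n + 1, Nat.succ_pos n⟩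
  invFun m := m - 1
  left_inv n := by simp
  right_inv m := by
    obtain ⟨m, hm⟩ := m
    apply PNat.coe_injective
    simp
    omega

lemma rz_eq (k : ℕ) : rz k = ∑' n : ℕ, (((n:ℝ) + 1) ^ k)⁻¹ := by
  rw [rz, ← natPNat.tsum_eq]
  apply tsum_congr
  intro n
  simp [natPNat]
  change (((n+1:ℕ):ℝ))^k = _
  push_cast
  rfl

/-- antidiagonal parametrization of `ℕ × ℕ`. -/
def adE : (Σ s : ℕ, Fin (s+1)) ≃ ℕ × ℕ where
  toFun x := (x.1 - x.2, x.2)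
  invFun p := ⟨p.1 + p.2, ⟨p.2, by omega⟩⟩
  left_inv := by
    rintro ⟨s, ⟨i, hi⟩⟩
    refine Sigma.ext (by simp; omega) ?_
    rw [Fin.heq_ext_iff (by simp; omega)]
  right_inv := by
    rintro ⟨a, b⟩
    simp

lemma inj_sum_le (A : Finset ℕ) (e : ℕ → ℕ) (N : ℕ)
    (hinj : ∀ x ∈ A, ∀ y ∈ A, e x = e y → x = y) (hlt : ∀ i ∈ A, e i < N) :
    ∑ i ∈ A, (((e i : ℕ):ℝ) + 1)⁻¹ ≤ hsum N := by
  have himg := Finset.sum_image (f := fun x : ℕ => ((x:ℝ) + 1)⁻¹) (g := e) (s := A) hinj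
  rw [← himg]
  apply Finset.sum_le_sum_of_subset_of_nonneg
  · intro x hx
    simp only [Finset.mem_image] at hx
    obtain ⟨i, hi, rfl⟩ := hx
    exact Finset.mem_range.2 (hlt i hi)
  · intro i _ _; positivity

lemma sum_absinv_le (s : ℕ) :
    ∑ i ∈ Finset.range (s+1), (if 2*i = s then 0 else |(s:ℝ) - 2*i|⁻¹)
      ≤ 2 * hsum (s+1) := by
  have hle : ∀ i ∈ Finset.range (s+1),
      (if 2*i = s then 0 else |(s:ℝ) - 2*i|⁻¹)
        ≤ (if 2*i < s then (((s - 2*i - 1 : ℕ):ℝ) + 1)⁻¹ else 0)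
          + (if s < 2*i then (((2*i - s - 1 : ℕ):ℝ) + 1)⁻¹ else 0) := by
    intro i _
    rcases lt_trichotomy (2*i) s with h | h | h
    · rw [if_neg (by omega), if_pos h, if_neg (by omega)]
      obtain ⟨k, hk⟩ : ∃ k, s = 2*i + 1 + k := ⟨s - (2*i+1), by omega⟩
      have e1 : (s:ℝ) - 2*i = (k:ℝ) + 1 := by rw [hk]; push_cast; ring
      have e2 : s - 2*i - 1 = k := by omega
      rw [e1, e2, abs_of_pos (by positivity), add_zero]
    · rw [if_pos h, if_neg (by omega), if_neg (by omega)]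
      norm_num
    · rw [if_neg (by omega), if_neg (by omega), if_pos h]
      obtain ⟨k, hk⟩ : ∃ k, 2*i = s + 1 + k := ⟨2*i - (s+1), by omega⟩
      have hc : (2:ℝ)*(i:ℝ) = (s:ℝ) + 1 + k := by exact_mod_cast congrArg (Nat.cast : ℕ → ℝ) hk
      have e1 : (s:ℝ) - 2*i = -((k:ℝ) + 1) := by rw [hc]; ring
      have e2 : 2*i - s - 1 = k := by omega
      rw [e1, e2, abs_neg, abs_of_pos (by positivity), zero_add]
  calc ∑ i ∈ Finset.range (s+1), (if 2*i = s then 0 else |(s:ℝ) - 2*i|⁻¹)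
      ≤ ∑ i ∈ Finset.range (s+1),
        ((if 2*i < s then (((s - 2*i - 1 : ℕ):ℝ) + 1)⁻¹ else 0)
          + (if s < 2*i then (((2*i - s - 1 : ℕ):ℝ) + 1)⁻¹ else 0)) :=
        Finset.sum_le_sum hle
    _ = (∑ i ∈ (Finset.range (s+1)).filter (fun i => 2*i < s),
          (((s - 2*i - 1 : ℕ):ℝ) + 1)⁻¹)
        + ∑ i ∈ (Finset.range (s+1)).filter (fun i => s < 2*i),
          (((2*i - s - 1 : ℕ):ℝ) + 1)⁻¹ := by
        rw [Finset.sum_add_distrib, Finset.sum_filter, Finset.sum_filter]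
    _ ≤ hsum (s+1) + hsum (s+1) := by
        gcongr
        · apply inj_sum_le _ (fun i => s - 2*i - 1)
          · intro x hx y hy hxy
            simp only [Finset.mem_filter] at hx hy
            omega
          · intro i hi
            simp only [Finset.mem_filter] at hi
            omega
        · apply inj_sum_le _ (fun i => 2*i - s - 1)
          · intro x hx y hy hxy
            simp only [Finset.mem_filter] at hx hy
            omega
          · intro i hi
            simp only [Finset.mem_filter, Finset.mem_range] at hi
            omega
    _ = 2 * hsum (s+1) := by ring

lemma rpow_pack (s : ℕ) :
    Real.sqrt ((s:ℝ)+2) * ((((s:ℝ)+2)^2)⁻¹) ≤ ((((s:ℝ)+1)) ^ ((3:ℝ)/2))⁻¹ := by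
  have h2 : (0:ℝ) < (s:ℝ) + 2 := by positivity
  have h1 : (0:ℝ) < (s:ℝ) + 1 := by positivity
  have e : Real.sqrt ((s:ℝ)+2) * ((((s:ℝ)+2)^2)⁻¹) = (((s:ℝ)+2) ^ ((3:ℝ)/2))⁻¹ := by
    rw [Real.sqrt_eq_rpow, ← Real.rpow_natCast ((s:ℝ)+2) 2,
      ← Real.rpow_neg h2.le, ← Real.rpow_add h2, ← Real.rpow_neg h2.le]
    norm_num
  rw [e]
  apply inv_anti₀ (Real.rpow_pos_of_pos h1 _)
  apply Real.rpow_le_rpow h1.le (by linarith) (by norm_num)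

/-- Master summability criterion. -/
lemma summable_master (w : ℕ × ℕ → ℝ) (C : ℝ) (hC : 0 ≤ C)
    (h0 : ∀ a, w (a, a) = 0)
    (hb : ∀ a b, a ≠ b → |w (a, b)| ≤
      C * ((((a:ℝ) + b + 2)^2)⁻¹ * ((((b:ℝ) + 1))⁻¹ + |(a:ℝ) - b|⁻¹))) :
    Summable w := by
  rw [← summable_abs_iff]
  rw [← adE.summable_iff]
  have key : ∀ s : ℕ, ∑ i ∈ Finset.range (s+1), |w (s - i, i)|
      ≤ 6 * C * ((((s:ℝ)+1)) ^ ((3:ℝ)/2))⁻¹ := by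
    intro s
    have hstep : ∀ i ∈ Finset.range (s+1), |w (s - i, i)| ≤
        C * ((((s:ℝ) + 2)^2)⁻¹ * ((((i:ℝ) + 1))⁻¹
          + (if 2*i = s then 0 else |(s:ℝ) - 2*i|⁻¹))) := by
      intro i hi
      have his : i ≤ s := by simp at hi; omega
      by_cases hd : 2*i = s
      · have hsi : s - i = i := by omega
        rw [hsi, h0, abs_zero, if_pos hd]
        positivity
      · have hne : s - i ≠ i := by omega
        have hcast1 : ((s - i : ℕ):ℝ) = (s:ℝ) - i := by
          push_cast [Nat.cast_sub his]; ring
        have hbb := hb (s - i) i hne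
        rw [hcast1] at hbb
        rw [if_neg hd]
        calc |w (s - i, i)| ≤
            C * ((((s:ℝ) - i + i + 2)^2)⁻¹ * ((((i:ℝ) + 1))⁻¹ + |(s:ℝ) - i - i|⁻¹)) := hbb
          _ = C * ((((s:ℝ) + 2)^2)⁻¹ * ((((i:ℝ) + 1))⁻¹ + |(s:ℝ) - 2*i|⁻¹)) := by
              ring_nf
    have hs : ((s+1 : ℕ):ℝ) = (s:ℝ)+1 := by push_cast; ring
    calc ∑ i ∈ Finset.range (s+1), |w (s - i, i)|
        ≤ ∑ i ∈ Finset.range (s+1), C * ((((s:ℝ) + 2)^2)⁻¹ * ((((i:ℝ) + 1))⁻¹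
            + (if 2*i = s then 0 else |(s:ℝ) - 2*i|⁻¹))) := Finset.sum_le_sum hstep
      _ = C * ((((s:ℝ) + 2)^2)⁻¹ * (hsum (s+1)
            + ∑ i ∈ Finset.range (s+1), (if 2*i = s then 0 else |(s:ℝ) - 2*i|⁻¹))) := by
          rw [← Finset.mul_sum, ← Finset.mul_sum, Finset.sum_add_distrib, hsum]
      _ ≤ C * ((((s:ℝ) + 2)^2)⁻¹ * (2 * Real.sqrt ((s:ℝ)+1) + 2 * (2 * Real.sqrt ((s:ℝ)+1)))) := by
          have h1 : hsum (s+1) ≤ 2 * Real.sqrt ((s:ℝ)+1) := by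
            have := hsum_le_sqrt (s+1); rw [hs] at this; exact this
          have h2 : ∑ i ∈ Finset.range (s+1), (if 2*i = s then 0 else |(s:ℝ) - 2*i|⁻¹)
              ≤ 2 * (2 * Real.sqrt ((s:ℝ)+1)) := by
            have := sum_absinv_le s
            have h3 := hsum_le_sqrt (s+1); rw [hs] at h3
            linarith
          gcongr
      _ = 6 * C * (Real.sqrt ((s:ℝ)+1) * ((((s:ℝ)+2)^2)⁻¹)) := by ring
      _ ≤ 6 * C * (Real.sqrt ((s:ℝ)+2) * ((((s:ℝ)+2)^2)⁻¹)) := by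
          apply mul_le_mul_of_nonneg_left _ (by positivity)
          apply mul_le_mul_of_nonneg_right (Real.sqrt_le_sqrt (by linarith)) (by positivity)
      _ ≤ 6 * C * ((((s:ℝ)+1)) ^ ((3:ℝ)/2))⁻¹ :=
          mul_le_mul_of_nonneg_left (rpow_pack s) (by positivity)
  apply (summable_sigma_of_nonneg (fun x => abs_nonneg _)).2
  constructor
  · intro s; exact Summable.of_finite
  · apply Summable.of_nonneg_of_le
      (fun s => tsum_nonneg (fun i => abs_nonneg _))
      (fun s => ?_) (summable_shift_rpow.mul_left (6 * C))
    rw [tsum_fintype]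
    calc ∑ i : Fin (s+1), |w (adE ⟨s, i⟩)|
        = ∑ i ∈ Finset.range (s+1), |w (s - i, i)| := by
          rw [← Fin.sum_univ_eq_sum_range (fun i => |w (s - i, i)|) (s+1)]
          rfl
      _ ≤ 6 * C * ((((s:ℝ)+1)) ^ ((3:ℝ)/2))⁻¹ := key s

/-- antidiagonal cancellation. -/
lemma reflect_sum_zero (s : ℕ) :
    ∑ i ∈ Finset.range (s+1), (if 2*i = s then (0:ℝ) else ((s:ℝ) - 2*i)⁻¹) = 0 := by
  set f : ℕ → ℝ := fun i => if 2*i = s then (0:ℝ) else ((s:ℝ) - 2*i)⁻¹ with hf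
  have hrefl := Finset.sum_range_reflect f (s+1)
  have hneg : ∀ i ∈ Finset.range (s+1), f (s + 1 - 1 - i) = - f i := by
    intro i hi
    have his : i ≤ s := by simp at hi; omega
    have h1 : s + 1 - 1 - i = s - i := by omega
    rw [h1]
    simp only [hf]
    by_cases hd : 2*i = s
    · rw [if_pos hd, if_pos (by omega)]
      simp
    · rw [if_neg (by omega), if_neg hd]
      have hcast : ((s - i : ℕ):ℝ) = (s:ℝ) - i := by
        push_cast [Nat.cast_sub his]; ring
      rw [hcast]
      rw [show (s:ℝ) - 2*((s:ℝ) - i) = -((s:ℝ) - 2*i) by ring, inv_neg]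
  have h2 : ∑ i ∈ Finset.range (s+1), f i = - ∑ i ∈ Finset.range (s+1), f i := by
    calc ∑ i ∈ Finset.range (s+1), f i
        = ∑ i ∈ Finset.range (s+1), f (s + 1 - 1 - i) := hrefl.symm
      _ = ∑ i ∈ Finset.range (s+1), (- f i) := Finset.sum_congr rfl hneg
      _ = - ∑ i ∈ Finset.range (s+1), f i := by rw [Finset.sum_neg_distrib]
  linarith

lemma hsum_succ (t : ℕ) : hsum (t+1) = hsum t + ((t:ℝ)+1)⁻¹ := by
  rw [hsum, Finset.sum_range_succ, hsum]

lemma hsum_diff {m n : ℕ} (h : m ≤ n) :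
    hsum n - hsum m = ∑ k ∈ Finset.Ico m n, ((k:ℝ)+1)⁻¹ := by
  rw [hsum, hsum, Finset.range_eq_Ico,
    ← Finset.sum_Ico_consecutive (fun k => ((k:ℝ)+1)⁻¹) (Nat.zero_le m) h]
  rw [Finset.range_eq_Ico]
  ring

/-- `Σ_{a<M} 1/(a+b+2) = hsum (M+b+1) - hsum (b+1)`. -/
lemma sumS1 (b M : ℕ) :
    ∑ a ∈ Finset.range M, ((a:ℝ) + b + 2)⁻¹ = hsum (M+b+1) - hsum (b+1) := by
  rw [hsum_diff (by omega : b+1 ≤ M+b+1), Finset.sum_Ico_eq_sum_range]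
  have hMb : M + b + 1 - (b + 1) = M := by omega
  rw [hMb]
  apply Finset.sum_congr rfl
  intro a _
  push_cast
  ring_nf

/-- `Σ_{a<M, a≠b} 1/(a-b) = hsum (M-1-b) - hsum b` for `M ≥ b+1`. -/
lemma sumS2 (b M : ℕ) (hM : b + 1 ≤ M) :
    ∑ a ∈ Finset.range M, (if a = b then (0:ℝ) else ((a:ℝ) - b)⁻¹)
      = hsum (M-1-b) - hsum b := by
  have hsplit : Finset.range M = Finset.Ico 0 (b+1) ∪ Finset.Ico (b+1) M := by
    rw [Finset.range_eq_Ico, Finset.Ico_union_Ico_eq_Ico (Nat.zero_le _) hM]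
  rw [Finset.range_eq_Ico, ← Finset.sum_Ico_consecutive _ (Nat.zero_le (b+1)) hM]
  have part1 : ∑ a ∈ Finset.Ico 0 (b+1), (if a = b then (0:ℝ) else ((a:ℝ) - b)⁻¹)
      = - hsum b := by
    rw [← Finset.range_eq_Ico, Finset.sum_range_succ, if_pos rfl, add_zero]
    have : ∀ a ∈ Finset.range b, (if a = b then (0:ℝ) else ((a:ℝ) - b)⁻¹)
        = ((a:ℝ) - b)⁻¹ := by
      intro a ha
      rw [if_neg (by simp at ha; omega)]
    rw [Finset.sum_congr rfl this]
    have hrefl := Finset.sum_range_reflect (fun a => ((a:ℝ) - b)⁻¹) b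
    rw [← hrefl]
    have : ∀ j ∈ Finset.range b, ((((b - 1 - j : ℕ)):ℝ) - b)⁻¹ = -(((j:ℝ)+1)⁻¹) := by
      intro j hj
      have hjb : j < b := by simpa using hj
      obtain ⟨k, hk⟩ : ∃ k, b = k + j + 1 := ⟨b - j - 1, by omega⟩
      have e2 : b - 1 - j = k := by omega
      rw [e2, hk, show ((k:ℝ) - ((k + j + 1:ℕ):ℝ)) = -((j:ℝ)+1) by push_cast; ring, inv_neg]
    rw [Finset.sum_congr rfl this, Finset.sum_neg_distrib, hsum]
  have part2 : ∑ a ∈ Finset.Ico (b+1) M, (if a = b then (0:ℝ) else ((a:ℝ) - b)⁻¹)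
      = hsum (M-1-b) := by
    have : ∀ a ∈ Finset.Ico (b+1) M, (if a = b then (0:ℝ) else ((a:ℝ) - b)⁻¹)
        = ((a:ℝ) - b)⁻¹ := by
      intro a ha
      rw [if_neg (by simp at ha; omega)]
    rw [Finset.sum_congr rfl this, Finset.sum_Ico_eq_sum_range, hsum]
    have : M - (b+1) = M - 1 - b := by omega
    rw [this]
    apply Finset.sum_congr rfl
    intro k _
    push_cast
    ring_nf
  rw [part1, part2]
  ring

lemma sumS3 (b M : ℕ) (hM : b + 1 ≤ M) :
    ∑ a ∈ Finset.range M, (if a = b then (0:ℝ) else ((a:ℝ) + b + 2)⁻¹)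
      = hsum (M+b+1) - hsum (b+1) - (2*((b:ℝ)+1))⁻¹ := by
  have hpt : ∀ a ∈ Finset.range M, (if a = b then (0:ℝ) else ((a:ℝ) + b + 2)⁻¹)
      = ((a:ℝ) + b + 2)⁻¹ - (if a = b then ((a:ℝ) + b + 2)⁻¹ else 0) := by
    intro a _
    by_cases h : a = b <;> simp [h]
  rw [Finset.sum_congr rfl hpt, Finset.sum_sub_distrib, sumS1,
    Finset.sum_ite_eq' (Finset.range M) b (fun a => ((a:ℝ) + b + 2)⁻¹),
    if_pos (Finset.mem_range.2 (by omega))]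
  have : ((b:ℝ) + b + 2)⁻¹ = (2*((b:ℝ)+1))⁻¹ := by
    rw [show (b:ℝ) + b + 2 = 2*((b:ℝ)+1) by ring]
  rw [this]

/-- The column sum telescopes to `3/(4(b+1)^2)`. -/
lemma col_tsum (b : ℕ)
    (hc : Summable (fun a : ℕ => if a = b then (0:ℝ) else (((a:ℝ)+b+2) * ((a:ℝ)-b))⁻¹)) :
    ∑' a : ℕ, (if a = b then (0:ℝ) else (((a:ℝ)+b+2) * ((a:ℝ)-b))⁻¹)
      = 3 / (4 * ((b:ℝ)+1)^2) := by
  set n : ℝ := (b:ℝ) + 1 with hn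
  have hn0 : (0:ℝ) < n := by rw [hn]; positivity
  -- partial fraction pointwise
  have pf : ∀ a : ℕ, (if a = b then (0:ℝ) else (((a:ℝ)+b+2) * ((a:ℝ)-b))⁻¹)
      = (2*n)⁻¹ * ((if a = b then (0:ℝ) else ((a:ℝ)-b)⁻¹)
          - (if a = b then (0:ℝ) else ((a:ℝ)+b+2)⁻¹)) := by
    intro a
    by_cases h : a = b
    · simp [h]
    · rw [if_neg h, if_neg h, if_neg h]
      have h1 : ((a:ℝ) - b) ≠ 0 := by
        have : (a:ℝ) ≠ (b:ℝ) := by exact_mod_cast h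
        exact sub_ne_zero.2 this
      have h2 : ((a:ℝ) + b + 2) ≠ 0 := by positivity
      rw [hn]
      field_simp
      ring
  -- partial sums
  have hps : ∀ M : ℕ, b + 1 ≤ M →
      ∑ a ∈ Finset.range M, (if a = b then (0:ℝ) else (((a:ℝ)+b+2) * ((a:ℝ)-b))⁻¹)
        = 3/(4*n^2) - (2*n)⁻¹ * (hsum (M+b+1) - hsum (M-1-b)) := by
    intro M hM
    rw [Finset.sum_congr rfl (fun a _ => pf a), ← Finset.mul_sum,
      Finset.sum_sub_distrib, sumS2 b M hM, sumS3 b M hM]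
    have hbn : hsum (b+1) = hsum b + n⁻¹ := by rw [hsum_succ, hn]
    rw [hbn]
    field_simp
    ring
  -- error term tends to zero
  have hE : Tendsto (fun M => hsum (M+b+1) - hsum (M-1-b)) atTop (nhds 0) := by
    apply squeeze_zero' (g := fun M => (2*(b:ℝ)+2) * (((M-1-b : ℕ):ℝ)+1)⁻¹)
    · filter_upwards [eventually_ge_atTop (b+1)] with M hM
      rw [hsum_diff (by omega : M-1-b ≤ M+b+1)]
      apply Finset.sum_nonneg
      intro k _; positivity
    · filter_upwards [eventually_ge_atTop (b+1)] with M hM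
      rw [hsum_diff (by omega : M-1-b ≤ M+b+1)]
      have hcard : (Finset.Ico (M-1-b) (M+b+1)).card = 2*b+2 := by
        rw [Nat.card_Ico]; omega
      calc ∑ k ∈ Finset.Ico (M-1-b) (M+b+1), ((k:ℝ)+1)⁻¹
          ≤ (Finset.Ico (M-1-b) (M+b+1)).card • ((((M-1-b:ℕ):ℝ))+1)⁻¹ := by
            apply Finset.sum_le_card_nsmul
            intro k hk
            simp only [Finset.mem_Ico] at hk
            have : (((M-1-b:ℕ)):ℝ) + 1 ≤ (k:ℝ) + 1 := by
              have : ((M-1-b:ℕ):ℝ) ≤ (k:ℝ) := by exact_mod_cast hk.1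
              linarith
            exact inv_anti₀ (by positivity) this
        _ = (2*(b:ℝ)+2) * ((((M-1-b:ℕ):ℝ))+1)⁻¹ := by
            rw [hcard, nsmul_eq_mul]
            push_cast
            ring
    · have h1 : Tendsto (fun t : ℕ => (((t:ℕ):ℝ)+1)⁻¹) atTop (nhds 0) := by
        apply Tendsto.comp tendsto_inv_atTop_zero
        apply Filter.tendsto_atTop_add_const_right
        exact tendsto_natCast_atTop_atTop
      have h2 : Tendsto (fun M : ℕ => M - 1 - b) atTop atTop := by
        apply tendsto_atTop_atTop.2
        intro t
        exact ⟨t + b + 1, fun M hM => by omega⟩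
      have := (h1.comp h2).const_mul (2*(b:ℝ)+2)
      simpa using this
  -- conclude
  have htend : Tendsto (fun M => ∑ a ∈ Finset.range M,
      (if a = b then (0:ℝ) else (((a:ℝ)+b+2) * ((a:ℝ)-b))⁻¹)) atTop (nhds (3/(4*n^2))) := by
    have base : Tendsto (fun M : ℕ => 3/(4*n^2) - (2*n)⁻¹ * (hsum (M+b+1) - hsum (M-1-b)))
        atTop (nhds (3/(4*n^2) - (2*n)⁻¹ * 0)) :=
      tendsto_const_nhds.sub (hE.const_mul _)
    rw [mul_zero, sub_zero] at base
    apply base.congr'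
    filter_upwards [eventually_ge_atTop (b+1)] with M hM
    exact (hps M hM).symm
  have := (hc.hasSum_iff_tendsto_nat).2 htend
  rw [this.tsum_eq, hn]

lemma geom_diag (t : ℕ) (n : ℝ) (hn : 0 < n) :
    ∑ j ∈ Finset.Icc 2 (t+2), (2:ℝ)^j * (((2*n)^j)⁻¹ * (n^(t+3-j))⁻¹)
      = ((t:ℝ)+1) * (n^(t+3))⁻¹ := by
  have hterm : ∀ j ∈ Finset.Icc 2 (t+2),
      (2:ℝ)^j * (((2*n)^j)⁻¹ * (n^(t+3-j))⁻¹) = (n^(t+3))⁻¹ := by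
    intro j hj
    simp only [Finset.mem_Icc] at hj
    have hjle : j ≤ t+3 := by omega
    have hpow : n^(t+3-j) * n^j = n^(t+3) := by
      rw [← pow_add, Nat.sub_add_cancel hjle]
    have hn2 : ((2:ℝ)*n)^j = 2^j * n^j := by rw [mul_pow]
    rw [hn2, mul_inv]
    have h2 : (2:ℝ)^j ≠ 0 := by positivity
    have hnj : n^j ≠ 0 := by positivity
    have hnlj : n^(t+3-j) ≠ 0 := by positivity
    field_simp
    rw [← hpow]
    ring
  rw [Finset.sum_congr rfl hterm, Finset.sum_const, Nat.card_Icc]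
  have : t + 2 + 1 - 2 = t + 1 := by omega
  rw [this, nsmul_eq_mul]
  push_cast
  ring

lemma geom_off (t : ℕ) (n d : ℝ) (hn : 0 < n) (hd : d ≠ 0) (hm : 0 < 2*n + d) :
    ∑ j ∈ Finset.Icc 2 (t+2), (2:ℝ)^j * (((2*n+d)^j)⁻¹ * (n^(t+3-j))⁻¹)
      = 4 * ((2*n+d) * d * n^(t+1))⁻¹ - 2^(t+3) * ((2*n+d)^(t+2) * d)⁻¹ := by
  set m : ℝ := 2*n + d with hmdef
  have hm0 : m ≠ 0 := ne_of_gt hm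
  set x : ℝ := 2*n/m with hx
  have hx1 : x ≠ 1 := by
    rw [hx]
    intro h
    rw [div_eq_one_iff_eq hm0] at h
    apply hd
    rw [hmdef] at h
    linarith
  have hterm : ∀ j ∈ Finset.Icc 2 (t+2),
      (2:ℝ)^j * ((m^j)⁻¹ * (n^(t+3-j))⁻¹) = (n^(t+3))⁻¹ * x^j := by
    intro j hj
    simp only [Finset.mem_Icc] at hj
    have hjle : j ≤ t+3 := by omega
    have hpow : n^(t+3-j) * n^j = n^(t+3) := by
      rw [← pow_add, Nat.sub_add_cancel hjle]
    rw [hx, div_pow, mul_pow]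
    have hnj : n^j ≠ 0 := by positivity
    have hnlj : n^(t+3-j) ≠ 0 := by positivity
    have hmj : m^j ≠ 0 := by positivity
    field_simp
    rw [← hpow]
  rw [Finset.sum_congr rfl hterm, ← Finset.mul_sum]
  have hsplit : ∑ j ∈ Finset.Icc 2 (t+2), x^j
      = (∑ j ∈ Finset.range (t+3), x^j) - (1 + x) := by
    have h1 : Finset.Icc 2 (t+2) = Finset.Ico 2 (t+3) := by
      exact (Finset.Ico_add_one_right_eq_Icc 2 (t+2)).symm
    have h2 : ∑ j ∈ Finset.Ico 0 2, x^j + ∑ j ∈ Finset.Ico 2 (t+3), x^j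
        = ∑ j ∈ Finset.Ico 0 (t+3), x^j :=
      Finset.sum_Ico_consecutive _ (by omega) (by omega)
    have h3 : ∑ j ∈ Finset.range 2, x^j = 1 + x := by
      rw [Finset.sum_range_succ, Finset.sum_range_succ]
      simp
    rw [h1]
    rw [← Finset.range_eq_Ico, ← Finset.range_eq_Ico] at h2
    rw [← h2, h3]
    ring
  rw [hsplit, geom_sum_eq hx1]
  have hxm : x - 1 = -d/m := by rw [hx, div_sub_one hm0, hmdef]; ring
  have hxl : x^(t+3) = 2^(t+3) * n^(t+3) / m^(t+3) := by
    rw [hx, div_pow, mul_pow]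
  rw [hxl, hxm, hx]
  have hn0 : n ≠ 0 := ne_of_gt hn
  have e1 : m^(t+3) ≠ 0 := by positivity
  have e2 : m^(t+2) ≠ 0 := by positivity
  have e3 : n^(t+3) ≠ 0 := by positivity
  have e4 : n^(t+1) ≠ 0 := by positivity
  field_simp
  ring

lemma adE_apply (s : ℕ) (i : Fin (s+1)) : adE ⟨s, i⟩ = (s - (i:ℕ), (i:ℕ)) := rfl

noncomputable def Fj (t j : ℕ) : ℕ × ℕ → ℝ := fun p =>
  (2:ℝ)^j * ((((p.1:ℝ) + p.2 + 2)^j)⁻¹ * (((p.2:ℝ) + 1)^(t+3-j))⁻¹)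
noncomputable def dgf (t : ℕ) : ℕ × ℕ → ℝ := fun p =>
  if p.1 = p.2 then ((t:ℝ)+1) * ((((p.2:ℝ)+1))^(t+3))⁻¹ else 0
noncomputable def ggf (t : ℕ) : ℕ × ℕ → ℝ := fun p =>
  if p.1 = p.2 then 0 else
    4 * ((((p.1:ℝ) + p.2 + 2) * ((p.1:ℝ) - p.2) * (((p.2:ℝ)+1))^(t+1))⁻¹)
noncomputable def hhf (t : ℕ) : ℕ × ℕ → ℝ := fun p =>
  if p.1 = p.2 then 0 else
    (2:ℝ)^(t+3) * ((((p.1:ℝ) + p.2 + 2)^(t+2) * ((p.1:ℝ) - p.2))⁻¹)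

lemma phi_eq (t : ℕ) (p : ℕ × ℕ) :
    ∑ j ∈ Finset.Icc 2 (t+2), Fj t j p = dgf t p + (ggf t p - hhf t p) := by
  obtain ⟨a, b⟩ := p
  by_cases hab : a = b
  · subst hab
    simp only [Fj, dgf, ggf, hhf, eq_self_iff_true, if_true, sub_zero, add_zero]
    have e : (a:ℝ) + a + 2 = 2*((a:ℝ)+1) := by ring
    calc ∑ j ∈ Finset.Icc 2 (t+2), (2:ℝ)^j * ((((a:ℝ)+a+2)^j)⁻¹ * (((a:ℝ)+1)^(t+3-j))⁻¹)
        = ∑ j ∈ Finset.Icc 2 (t+2), (2:ℝ)^j * (((2*((a:ℝ)+1))^j)⁻¹ * (((a:ℝ)+1)^(t+3-j))⁻¹) := by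
          rw [e]
      _ = ((t:ℝ)+1) * (((a:ℝ)+1)^(t+3))⁻¹ := geom_diag t _ (by positivity)
  · have hd : ((a:ℝ) - b) ≠ 0 := sub_ne_zero.2 (by exact_mod_cast hab)
    have key := geom_off t ((b:ℝ)+1) ((a:ℝ)-b) (by positivity) hd
      (by rw [show 2*((b:ℝ)+1) + ((a:ℝ)-b) = (a:ℝ)+b+2 by ring]; positivity)
    rw [show 2*((b:ℝ)+1) + ((a:ℝ)-b) = (a:ℝ)+b+2 by ring] at key
    simp only [Fj, dgf, ggf, hhf, if_neg hab]
    rw [key]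
    ring

lemma summable_gg (t : ℕ) : Summable (ggf t) := by
  apply summable_master (ggf t) 12 (by norm_num)
  · intro a; simp [ggf]
  · intro a b hab
    have hm0 : (0:ℝ) < (a:ℝ) + b + 2 := by positivity
    have hn0 : (0:ℝ) < (b:ℝ) + 1 := by positivity
    have hdne : ((a:ℝ) - b) ≠ 0 := sub_ne_zero.2 (by exact_mod_cast hab)
    have hd0 : 0 < |(a:ℝ) - b| := abs_pos.2 hdne
    have hnt : (0:ℝ) < ((b:ℝ)+1)^(t+1) := by positivity
    simp only [ggf, if_neg hab]
    rw [abs_mul, abs_inv, abs_mul, abs_mul, abs_of_pos hm0, abs_of_pos hnt,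
      abs_of_nonneg (by norm_num : (0:ℝ) ≤ 4)]
    have hle : ((a:ℝ)+b+2) * |(a:ℝ)-b| * ((b:ℝ)+1)
        ≤ ((a:ℝ)+b+2) * |(a:ℝ)-b| * (((b:ℝ)+1)^(t+1)) :=
      mul_le_mul_of_nonneg_left (le_self_pow₀ (by linarith) (by omega))
        (by positivity)
    have step1 : (4:ℝ) * ((((a:ℝ)+b+2) * |(a:ℝ)-b| * (((b:ℝ)+1)^(t+1)))⁻¹)
        ≤ 4 * ((((a:ℝ)+b+2) * |(a:ℝ)-b| * ((b:ℝ)+1))⁻¹) :=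
      mul_le_mul_of_nonneg_left (inv_anti₀ (by positivity) hle) (by norm_num)
    refine le_trans step1 ?_
    have e1 : (12:ℝ) * ((((a:ℝ)+b+2)^2)⁻¹ * ((((b:ℝ)+1))⁻¹ + |(a:ℝ)-b|⁻¹))
        = 12*(|(a:ℝ)-b| + ((b:ℝ)+1)) / ((((a:ℝ)+b+2)^2) * (((b:ℝ)+1) * |(a:ℝ)-b|)) := by
      field_simp
    have e2 : (4:ℝ) * ((((a:ℝ)+b+2) * |(a:ℝ)-b| * ((b:ℝ)+1))⁻¹)
        = 4 / (((a:ℝ)+b+2) * |(a:ℝ)-b| * ((b:ℝ)+1)) := by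
      rw [div_eq_mul_inv]
    rw [e1, e2, div_le_div_iff₀ (by positivity) (by positivity)]
    have hmle : (a:ℝ)+b+2 ≤ 3*(((b:ℝ)+1) + |(a:ℝ)-b|) := by
      have : (a:ℝ) - b ≤ |(a:ℝ)-b| := le_abs_self _
      linarith
    nlinarith [mul_nonneg (mul_nonneg (mul_nonneg
      (by linarith : (0:ℝ) ≤ 3*(((b:ℝ)+1) + |(a:ℝ)-b|) - ((a:ℝ)+b+2)) hm0.le) hn0.le) hd0.le,
      mul_pos (mul_pos hm0 hn0) hd0]

lemma summable_hh (t : ℕ) : Summable (hhf t) := by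
  apply summable_master (hhf t) (2^(t+3)) (by positivity)
  · intro a; simp [hhf]
  · intro a b hab
    have hm0 : (0:ℝ) < (a:ℝ) + b + 2 := by positivity
    have hm1 : (1:ℝ) ≤ (a:ℝ) + b + 2 := by
      have := Nat.cast_nonneg (α := ℝ) a
      have := Nat.cast_nonneg (α := ℝ) b
      linarith
    have hn0 : (0:ℝ) < (b:ℝ) + 1 := by positivity
    have hdne : ((a:ℝ) - b) ≠ 0 := sub_ne_zero.2 (by exact_mod_cast hab)
    have hd0 : 0 < |(a:ℝ) - b| := abs_pos.2 hdne
    simp only [hhf, if_neg hab]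
    rw [abs_mul, abs_inv, abs_mul, abs_of_pos (by positivity : (0:ℝ) < ((a:ℝ)+b+2)^(t+2)),
      abs_of_pos (by positivity : (0:ℝ) < (2:ℝ)^(t+3))]
    have hle : (((a:ℝ)+b+2)^2 * |(a:ℝ)-b|) ≤ (((a:ℝ)+b+2)^(t+2) * |(a:ℝ)-b|) :=
      mul_le_mul_of_nonneg_right (pow_le_pow_right₀ hm1 (by omega)) (by positivity)
    have step1 : ((2:ℝ)^(t+3)) * ((((a:ℝ)+b+2)^(t+2) * |(a:ℝ)-b|)⁻¹)
        ≤ (2^(t+3)) * ((((a:ℝ)+b+2)^2 * |(a:ℝ)-b|)⁻¹) :=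
      mul_le_mul_of_nonneg_left (inv_anti₀ (by positivity) hle) (by positivity)
    refine le_trans step1 ?_
    rw [mul_inv]
    have : (((a:ℝ)+b+2)^2)⁻¹ * |(a:ℝ)-b|⁻¹
        ≤ (((a:ℝ)+b+2)^2)⁻¹ * ((((b:ℝ)+1))⁻¹ + |(a:ℝ)-b|⁻¹) := by
      apply mul_le_mul_of_nonneg_left _ (by positivity)
      have : (0:ℝ) ≤ (((b:ℝ)+1))⁻¹ := by positivity
      linarith
    calc (2:ℝ)^(t+3) * ((((a:ℝ)+b+2)^2)⁻¹ * |(a:ℝ)-b|⁻¹)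
        ≤ (2:ℝ)^(t+3) * ((((a:ℝ)+b+2)^2)⁻¹ * ((((b:ℝ)+1))⁻¹ + |(a:ℝ)-b|⁻¹)) :=
          mul_le_mul_of_nonneg_left this (by positivity)

lemma tsum_dg (t : ℕ) (hdg : Summable (dgf t)) :
    ∑' p : ℕ × ℕ, dgf t p = ((t:ℝ)+1) * rz (t+3) := by
  rw [Summable.tsum_prod' hdg (fun a => summable_of_ne_finset_zero (s := {a}) (by
    intro b hb
    simp only [Finset.mem_singleton] at hb
    simp only [dgf]
    rw [if_neg (fun h => hb h.symm)]))]
  have inner : ∀ a : ℕ, ∑' b : ℕ, dgf t (a, b) = ((t:ℝ)+1) * (((a:ℝ)+1)^(t+3))⁻¹ := by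
    intro a
    have hz : ∀ b' : ℕ, b' ≠ a → dgf t (a, b') = 0 := by
      intro b' hb'
      simp only [dgf]
      rw [if_neg (fun h => hb' h.symm)]
    rw [tsum_eq_single a hz]
    simp [dgf]
  rw [tsum_congr inner, tsum_mul_left, rz_eq]

lemma tsum_hh (t : ℕ) (hhh' : Summable (hhf t)) : ∑' p : ℕ × ℕ, hhf t p = 0 := by
  have hcomp : Summable (fun x : Σ s : ℕ, Fin (s+1) => hhf t (adE x)) :=
    adE.summable_iff.mpr hhh'
  rw [← adE.tsum_eq (hhf t), Summable.tsum_sigma hcomp]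
  have inner : ∀ s : ℕ, ∑' i : Fin (s+1), hhf t (adE ⟨s, i⟩) = 0 := by
    intro s
    rw [tsum_fintype]
    have hpt : ∀ i : Fin (s+1), hhf t (adE ⟨s, i⟩)
        = ((2:ℝ)^(t+3) * ((((s:ℝ)+2)^(t+2))⁻¹))
          * (if 2*(i:ℕ) = s then (0:ℝ) else ((s:ℝ) - 2*(i:ℕ))⁻¹) := by
      intro i
      have his : (i:ℕ) ≤ s := by omega
      rw [adE_apply]
      by_cases hd : 2*(i:ℕ) = s
      · have h1 : s - (i:ℕ) = (i:ℕ) := by omega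
        rw [if_pos hd, mul_zero]
        simp [hhf, h1]
      · have h1 : s - (i:ℕ) ≠ (i:ℕ) := by omega
        rw [if_neg hd]
        simp only [hhf, if_neg h1]
        have hc : ((s - (i:ℕ) : ℕ):ℝ) = (s:ℝ) - (i:ℕ) := by
          push_cast [Nat.cast_sub his]; ring
        rw [hc, show (s:ℝ) - (i:ℕ) + (i:ℕ) + 2 = (s:ℝ) + 2 by ring,
          show (s:ℝ) - (i:ℕ) - (i:ℕ) = (s:ℝ) - 2*(i:ℕ) by ring, mul_inv]
        ring
    calc ∑ i : Fin (s+1), hhf t (adE ⟨s, i⟩)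
        = ∑ i : Fin (s+1), ((2:ℝ)^(t+3) * ((((s:ℝ)+2)^(t+2))⁻¹))
            * (if 2*(i:ℕ) = s then (0:ℝ) else ((s:ℝ) - 2*(i:ℕ))⁻¹) :=
          Finset.sum_congr rfl (fun i _ => hpt i)
      _ = ((2:ℝ)^(t+3) * ((((s:ℝ)+2)^(t+2))⁻¹))
            * ∑ i : Fin (s+1), (if 2*(i:ℕ) = s then (0:ℝ) else ((s:ℝ) - 2*(i:ℕ))⁻¹) := by
          rw [Finset.mul_sum]
      _ = ((2:ℝ)^(t+3) * ((((s:ℝ)+2)^(t+2))⁻¹))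
            * ∑ i ∈ Finset.range (s+1), (if 2*i = s then (0:ℝ) else ((s:ℝ) - 2*i)⁻¹) := by
          rw [Fin.sum_univ_eq_sum_range
            (fun i => (if 2*i = s then (0:ℝ) else ((s:ℝ) - 2*i)⁻¹)) (s+1)]
      _ = 0 := by rw [reflect_sum_zero, mul_zero]
  rw [tsum_congr inner, tsum_zero]

lemma tsum_gg (t : ℕ) (hgg' : Summable (ggf t)) :
    ∑' p : ℕ × ℕ, ggf t p = 3 * rz (t+3) := by
  have hG2 : Summable (fun p : ℕ × ℕ => ggf t (p.2, p.1)) :=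
    (Equiv.prodComm ℕ ℕ).summable_iff.mpr hgg'
  have hswap : ∑' p : ℕ × ℕ, ggf t (p.2, p.1) = ∑' p : ℕ × ℕ, ggf t p :=
    (Equiv.prodComm ℕ ℕ).tsum_eq (ggf t)
  rw [← hswap, Summable.tsum_prod' hG2 (fun b => hG2.prod_factor b)]
  have inner : ∀ b : ℕ, ∑' a : ℕ, ggf t (a, b) = 3 * (((b:ℝ)+1)^(t+3))⁻¹ := by
    intro b
    have hcb : Summable (fun a : ℕ => ggf t (a, b)) := hG2.prod_factor b
    have hrw : ∀ a : ℕ, ggf t (a, b)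
        = (4 * ((((b:ℝ)+1)^(t+1))⁻¹))
          * (if a = b then (0:ℝ) else (((a:ℝ)+b+2) * ((a:ℝ)-b))⁻¹) := by
      intro a
      by_cases h : a = b
      · simp [ggf, h]
      · simp only [ggf, if_neg h]
        rw [mul_inv, mul_inv]
        ring
    have hcol : Summable (fun a : ℕ => if a = b then (0:ℝ)
        else (((a:ℝ)+b+2) * ((a:ℝ)-b))⁻¹) := by
      have h4 : (4 * ((((b:ℝ)+1)^(t+1))⁻¹)) ≠ 0 := by positivity
      exact (summable_mul_left_iff h4).mp (hcb.congr hrw)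
    rw [tsum_congr hrw, tsum_mul_left, col_tsum b hcol]
    have hX : ((b:ℝ)+1) ≠ 0 := by positivity
    have hpows : ((b:ℝ)+1)^(t+1) * ((b:ℝ)+1)^2 = ((b:ℝ)+1)^(t+3) := by
      rw [← pow_add]
    field_simp
    rw [← hpows]
    ring
  rw [tsum_congr inner, tsum_mul_left, rz_eq]

/-- The weighted Euler sum formula of Ohno–Zudilin: for `l ≥ 3`,
`Σ_{j=2}^{l-1} 2^j ζ(j, l-j) = (l+1) ζ(l)`. -/
theorem weighted_euler_sum (l : ℕ) (hl : 3 ≤ l) :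
    ∑ j ∈ Finset.Icc 2 (l - 1), (2 : ℝ) ^ j * mzv ![j, l - j]
      = ((l : ℝ) + 1) * rz l := by
  obtain ⟨t, rfl⟩ : ∃ t, l = t + 3 := ⟨l - 3, by omega⟩
  have h1 : t + 3 - 1 = t + 2 := rfl
  rw [h1]
  have hF : ∀ j ∈ Finset.Icc 2 (t+2), Summable (Fj t j) := by
    intro j hj
    simp only [Finset.mem_Icc] at hj
    exact (summable_F j (t+3-j) hj.1 (by omega)).mul_left ((2:ℝ)^j)
  have step1 : ∀ j ∈ Finset.Icc 2 (t+2), (2:ℝ)^j * mzv ![j, t+3-j] = ∑' p, Fj t j p := by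
    intro j hj
    rw [mzv_two j (t+3-j)]
    exact (tsum_mul_left (a := (2:ℝ)^j)).symm
  rw [Finset.sum_congr rfl step1, ← Summable.tsum_finsetSum (fun j hj => hF j hj)]
  have hgg' := summable_gg t
  have hhh' := summable_hh t
  have hφ : Summable (fun p => ∑ j ∈ Finset.Icc 2 (t+2), Fj t j p) :=
    summable_sum (fun j hj => hF j hj)
  have hdg' : Summable (dgf t) := by
    apply (hφ.sub (hgg'.sub hhh')).congr
    intro p
    rw [phi_eq t p]
    ring
  rw [tsum_congr (fun p => phi_eq t p), Summable.tsum_add hdg' (hgg'.sub hhh'), Summable.tsum_sub hgg' hhh',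
    tsum_dg t hdg', tsum_gg t hgg', tsum_hh t hhh']
  push_cast
  ring
end
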